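/- Let $p$ be a prime with $p \mid q_1$, $p \mid q_2$, and $(p, q_3) = 1$. Then $b(p) = \sum_{a=1}^{p-1} c_1(a,p) c_2(a,p) c_3(a,p) e(-na/p)$ equals $1-p$ if $p \mid a_1 + a_2 - n$, and equals $1$ if $p \nmid a_1 + a_2 - n$. -/

import Mathlib

open Finset

/-- `e(x) = e^{2πix}`. -/
noncomputable def e (x : ℂ) : ℂ := Complex.exp (2 * Real.pi * Complex.I * x)

/-- The generalized Ramanujan sum. -/
noncomputable def ramanujanC (aj : ℤ) (qj : ℕ) (a : ℤ) (q : ℕ) : ℂ :=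
  ∑ k ∈ (Finset.Icc 1 q).filter
      (fun k => Nat.Coprime k q ∧ (k : ℤ) % (Nat.gcd qj q : ℤ) = aj % (Nat.gcd qj q : ℤ)),
    e ((a : ℂ) * k / q)

/-- `b(q) = ∑_{a < q, (a,q)=1} c₁(a,q) c₂(a,q) c₃(a,q) e(-na/q)`. -/
noncomputable def bfun (n a1 a2 a3 : ℤ) (q1 q2 q3 : ℕ) (q : ℕ) : ℂ :=
  ∑ a ∈ (Finset.range q).filter (fun a => Nat.Coprime a q),
    ramanujanC a1 q1 (a : ℤ) q * ramanujanC a2 q2 (a : ℤ) q * ramanujanC a3 q3 (a : ℤ) q *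
      e (-(n : ℂ) * a / q)

lemma e_add (x y : ℂ) : e (x + y) = e x * e y := by
  simp [e, mul_add, Complex.exp_add]

lemma e_int (z : ℤ) : e (z : ℂ) = 1 := by
  rw [e, mul_comm]
  exact_mod_cast Complex.exp_int_mul_two_pi_mul_I z

lemma e_zero : e 0 = 1 := by simp [e]

lemma e_pow (x : ℂ) (k : ℕ) : e x ^ k = e (k * x) := by
  rw [e, e, ← Complex.exp_nat_mul]; ring_nf

lemma e_ne_one (p : ℕ) (hp : p.Prime) (m : ℤ) (h : ¬ (p:ℤ) ∣ m) :
    e ((m : ℂ) / p) ≠ 1 := by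
  have hp0 : (p:ℂ) ≠ 0 := Nat.cast_ne_zero.mpr hp.pos.ne'
  intro hone
  rw [e, Complex.exp_eq_one_iff] at hone
  obtain ⟨t, ht⟩ := hone
  have h2 : (2 * (Real.pi:ℂ) * Complex.I) ≠ 0 := by
    simp [Real.pi_ne_zero, Complex.I_ne_zero, Complex.ofReal_ne_zero]
  have hmp : (m:ℂ) = (t:ℂ) * p := by
    field_simp at ht
    linear_combination ht
  have : m = t * p := by exact_mod_cast hmp
  exact h ⟨t, by linarith [mul_comm t (p:ℤ)]⟩

lemma sum_e_eq_zero (p : ℕ) (hp : p.Prime) (m : ℤ) (h : ¬ (p:ℤ) ∣ m) :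
    ∑ a ∈ range p, e ((m : ℂ) * a / p) = 0 := by
  have hp0 : (p:ℂ) ≠ 0 := Nat.cast_ne_zero.mpr hp.pos.ne'
  have hz : ∀ a : ℕ, e ((m:ℂ) * a / p) = e ((m:ℂ)/p) ^ a := fun a => by
    rw [e_pow]; ring_nf
  have hne := e_ne_one p hp m h
  have hpow : e ((m:ℂ)/p) ^ p = 1 := by
    rw [e_pow, show (p:ℂ) * ((m:ℂ)/p) = ((m:ℤ):ℂ) by field_simp, e_int]
  calc ∑ a ∈ range p, e ((m:ℂ)*a/p) = ∑ a ∈ range p, e ((m:ℂ)/p) ^ a := by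
        exact Finset.sum_congr rfl fun a _ => hz a
    _ = (e ((m:ℂ)/p) ^ p - 1) / (e ((m:ℂ)/p) - 1) := geom_sum_eq hne p
    _ = 0 := by rw [hpow]; simp


lemma ramanujanC_of_dvd (p : ℕ) (hp : p.Prime) (aj : ℤ) (qj : ℕ) (hdvd : p ∣ qj)
    (hnd : ¬ (p:ℤ) ∣ aj) (a : ℤ) :
    ramanujanC aj qj a p = e ((a:ℂ) * aj / p) := by
  have hp0 : (p:ℂ) ≠ 0 := Nat.cast_ne_zero.mpr hp.pos.ne'
  have hpz : (0:ℤ) < p := by exact_mod_cast hp.pos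
  have hg : Nat.gcd qj p = p := Nat.dvd_antisymm (Nat.gcd_dvd_right _ _) (Nat.dvd_gcd hdvd dvd_rfl)
  have hmod0 : (0:ℤ) ≤ aj % p := Int.emod_nonneg aj (by exact_mod_cast hp.pos.ne')
  have hmodlt : aj % p < p := Int.emod_lt_of_pos aj hpz
  have hmodne : aj % p ≠ 0 := fun h => hnd (Int.dvd_of_emod_eq_zero h)
  set k0 : ℕ := (aj % p).toNat with hk0def
  have hk0 : (k0 : ℤ) = aj % p := Int.toNat_of_nonneg hmod0
  have hk0pos : 1 ≤ k0 := by omega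
  have hk0lt : k0 < p := by omega
  have hfilter : (Finset.Icc 1 p).filter
      (fun k => Nat.Coprime k p ∧ (k : ℤ) % (Nat.gcd qj p : ℤ) = aj % (Nat.gcd qj p : ℤ)) = {k0} := by
    ext k
    simp only [Finset.mem_filter, Finset.mem_Icc, Finset.mem_singleton, hg]
    constructor
    · rintro ⟨⟨h1, h2⟩, hcop, hm⟩
      have hkp : k ≠ p := by
        rintro rfl
        rw [Int.emod_self] at hm
        exact hmodne hm.symm
      have hklt : (k:ℤ) < p := by omega
      rw [Int.emod_eq_of_lt (by omega) hklt] at hm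
      omega
    · rintro rfl
      refine ⟨⟨hk0pos, by omega⟩, ?_, ?_⟩
      · exact Nat.Coprime.symm (hp.coprime_iff_not_dvd.mpr (Nat.not_dvd_of_pos_of_lt hk0pos hk0lt))
      · rw [hk0, Int.emod_emod_of_dvd aj dvd_rfl]
  rw [ramanujanC, hfilter, Finset.sum_singleton]
  have h1 : (k0:ℤ) + p * (aj / p) = aj := by
    rw [hk0]
    have := Int.mul_ediv_add_emod aj p
    omega
  have h1c : (k0:ℂ) = (aj:ℂ) - (p:ℂ) * ((aj / p : ℤ) : ℂ) := by
    have : ((k0:ℤ):ℂ) = ((aj - p * (aj / p) : ℤ) : ℂ) := by exact_mod_cast congrArg (Int.cast : ℤ → ℂ) (by omega : (k0:ℤ) = aj - p * (aj/p))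
    push_cast at this
    push_cast
    exact this
  have harg : (a:ℂ) * aj / p = (a:ℂ) * k0 / p + ((a * (aj / p) : ℤ) : ℂ) := by
    rw [h1c]
    push_cast
    field_simp
    ring
  rw [harg, e_add, e_int, mul_one]

lemma ramanujanC_three (p : ℕ) (hp : p.Prime) (a3 : ℤ) (q3 : ℕ) (hnd : ¬ p ∣ q3)
    (a : ℤ) (ha : ¬ (p:ℤ) ∣ a) :
    ramanujanC a3 q3 a p = -1 := by
  have hg : Nat.gcd q3 p = 1 := Nat.Coprime.symm (hp.coprime_iff_not_dvd.mpr hnd)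
  have hfilter : (Finset.Icc 1 p).filter
      (fun k => Nat.Coprime k p ∧ (k : ℤ) % (Nat.gcd q3 p : ℤ) = a3 % (Nat.gcd q3 p : ℤ)) = Finset.Ico 1 p := by
    ext k
    simp only [Finset.mem_filter, Finset.mem_Icc, Finset.mem_Ico, hg, Nat.cast_one, Int.emod_one]
    constructor
    · rintro ⟨⟨h1, h2⟩, hcop, -⟩
      refine ⟨h1, lt_of_le_of_ne h2 ?_⟩
      rintro rfl
      simp [Nat.Coprime, Nat.gcd_self] at hcop
      exact hp.one_lt.ne' hcop
    · rintro ⟨h1, h2⟩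
      exact ⟨⟨h1, h2.le⟩, Nat.Coprime.symm (hp.coprime_iff_not_dvd.mpr (Nat.not_dvd_of_pos_of_lt h1 h2)), trivial⟩
  rw [ramanujanC, hfilter]
  have hsum := sum_e_eq_zero p hp a ha
  rw [Finset.range_eq_Ico, Finset.sum_eq_sum_Ico_succ_bot hp.pos] at hsum
  simp only [Nat.cast_zero, mul_zero, zero_div, e_zero, zero_add] at hsum
  linear_combination hsum

theorem stmt7 (p : ℕ) (hp : p.Prime)
    (n a1 a2 a3 : ℤ) (q1 q2 q3 : ℕ)
    (hq1 : 1 ≤ q1) (hq2 : 1 ≤ q2) (hq3 : 1 ≤ q3)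
    (hp1 : p ∣ q1) (hp2 : p ∣ q2) (hp3 : ¬ p ∣ q3)
    (ha1 : Int.gcd a1 q1 = 1) (ha2 : Int.gcd a2 q2 = 1) :
    bfun n a1 a2 a3 q1 q2 q3 p =
      if (p : ℤ) ∣ (a1 + a2 - n) then (1 - (p : ℂ)) else 1 := by
  have hp0 : (p:ℂ) ≠ 0 := Nat.cast_ne_zero.mpr hp.pos.ne'
  have key : ∀ (b : ℤ) (qb : ℕ), p ∣ qb → Int.gcd b qb = 1 → ¬ (p:ℤ) ∣ b := by
    intro b qb hpq hb h
    have hd : (p:ℤ) ∣ (Int.gcd b qb : ℤ) := Int.dvd_coe_gcd h (Int.natCast_dvd_natCast.mpr hpq)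
    rw [hb] at hd
    have h1 := Int.le_of_dvd one_pos hd
    have h2 := hp.one_lt
    omega
  have hpa1 : ¬ (p:ℤ) ∣ a1 := key a1 q1 hp1 ha1
  have hpa2 : ¬ (p:ℤ) ∣ a2 := key a2 q2 hp2 ha2
  have hS : (Finset.range p).filter (fun a => Nat.Coprime a p) = Finset.Ico 1 p := by
    ext a
    simp only [Finset.mem_filter, Finset.mem_range, Finset.mem_Ico]
    constructor
    · rintro ⟨h1, h2⟩
      refine ⟨?_, h1⟩
      rcases Nat.eq_zero_or_pos a with rfl | h
      · simp [Nat.Coprime] at h2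
        exact absurd h2 hp.one_lt.ne'
      · exact h
    · rintro ⟨h1, h2⟩
      exact ⟨h2, Nat.Coprime.symm (hp.coprime_iff_not_dvd.mpr (Nat.not_dvd_of_pos_of_lt h1 h2))⟩
  rw [bfun, hS]
  have hterm : ∀ a ∈ Finset.Ico 1 p,
      ramanujanC a1 q1 (a:ℤ) p * ramanujanC a2 q2 (a:ℤ) p * ramanujanC a3 q3 (a:ℤ) p *
        e (-(n:ℂ) * a / p) = - e (((a1 + a2 - n : ℤ):ℂ) * a / p) := by
    intro a ha
    rw [Finset.mem_Ico] at ha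
    have hpa : ¬ (p:ℤ) ∣ (a:ℤ) := by
      rw [Int.natCast_dvd_natCast]
      exact Nat.not_dvd_of_pos_of_lt ha.1 ha.2
    rw [ramanujanC_of_dvd p hp a1 q1 hp1 hpa1, ramanujanC_of_dvd p hp a2 q2 hp2 hpa2,
        ramanujanC_three p hp a3 q3 hp3 _ hpa,
        show ((a1 + a2 - n : ℤ):ℂ) * a / p
            = (a:ℂ) * a1 / p + ((a:ℂ) * a2 / p + (-(n:ℂ) * a / p)) by push_cast; ring,
        e_add, e_add]
    push_cast
    ring
  rw [Finset.sum_congr rfl hterm]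
  by_cases hd : (p:ℤ) ∣ (a1 + a2 - n)
  · rw [if_pos hd]
    obtain ⟨c, hc⟩ := hd
    have hone : ∀ a ∈ Finset.Ico 1 p, - e (((a1 + a2 - n : ℤ):ℂ) * a / p) = -1 := by
      intro a _
      rw [show ((a1 + a2 - n : ℤ):ℂ) * a / p = ((c * a : ℤ):ℂ) by
        rw [hc]; push_cast; field_simp, e_int]
    rw [Finset.sum_congr rfl hone, Finset.sum_const, Nat.card_Ico]
    have : ((p - 1 : ℕ):ℂ) = (p:ℂ) - 1 := by
      push_cast [Nat.cast_sub hp.pos]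
      ring
    rw [nsmul_eq_mul, this]
    ring
  · rw [if_neg hd]
    have hsum := sum_e_eq_zero p hp (a1 + a2 - n) hd
    rw [Finset.range_eq_Ico, Finset.sum_eq_sum_Ico_succ_bot hp.pos] at hsum
    simp only [Nat.cast_zero, mul_zero, zero_div, e_zero, zero_add] at hsum
    rw [Finset.sum_neg_distrib]
    linear_combination -hsum
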